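/- Let (W,S) be a Coxeter system with Coxeter matrix (m_{s,t}) and let (a_s)_{s∈S} be real numbers. There exists a weight function φ : W → ℝ with φ(s) = a_s for all s ∈ S if and only if a_s = a_t whenever m_{s,t} is odd. -/

import Mathlib

set_option linter.unusedSectionVars false
set_option linter.unusedTactic false

open List

namespace CoxWeight

variable {B W : Type*} [Group W] {M : CoxeterMatrix B} (cs : CoxeterSystem M W)

noncomputable section

open Classical in
/-- Indicator of `u`, valued in `ℤˣ`. -/
def delta (u : W) : W → ℤˣ := fun t => if t = u then -1 else 1

@[simp] lemma delta_self (u : W) : delta u u = -1 := by simp [delta]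

lemma delta_of_ne {t u : W} (h : t ≠ u) : delta u t = 1 := by simp [delta, h]

/-- Conjugation action of `W` on functions `W → ℤˣ`. -/
def nuAut (w : W) : MulAut (W → ℤˣ) where
  toFun f := fun t => f (w⁻¹ * t * w)
  invFun f := fun t => f (w * t * w⁻¹)
  left_inv f := by funext t; congr 1; group
  right_inv f := by funext t; congr 1; group
  map_mul' f g := rfl

lemma nuAut_apply (w : W) (f : W → ℤˣ) (t : W) : nuAut w f t = f (w⁻¹ * t * w) := rfl

def nuHom : W →* MulAut (W → ℤˣ) where
  toFun := nuAut
  map_one' := by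
    apply MulEquiv.ext; intro f; funext t
    simp [nuAut_apply]
  map_mul' w v := by
    apply MulEquiv.ext; intro f; funext t
    show f ((w * v)⁻¹ * t * (w * v)) = f (v⁻¹ * (w⁻¹ * t * w) * v)
    congr 1; group

lemma nuAut_delta (w u : W) : nuAut w (delta u) = delta (w * u * w⁻¹) := by
  funext t
  show delta u (w⁻¹ * t * w) = delta (w * u * w⁻¹) t
  by_cases h : t = w * u * w⁻¹
  · subst h
    rw [delta_self, show w⁻¹ * (w * u * w⁻¹) * w = u by group, delta_self]
  · rw [delta_of_ne h, delta_of_ne]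
    intro hc
    apply h
    rw [show t = w * (w⁻¹ * t * w) * w⁻¹ by group, hc]

lemma sq_eq_one (f : W → ℤˣ) : f * f = 1 := by
  funext t
  exact Int.units_mul_self _

lemma neg_one_ne_one : (-1 : ℤˣ) ≠ 1 := by decide

lemma prod_delta_of_not_mem : ∀ (l : List W) (t : W), t ∉ l →
    (l.map delta).prod t = 1
  | [], t, _ => rfl
  | u :: l, t, h => by
    simp only [map_cons, prod_cons, Pi.mul_apply]
    rw [prod_delta_of_not_mem l t (fun hm => h (mem_cons_of_mem _ hm)),
      delta_of_ne (fun he => h (by rw [he]; exact mem_cons_self)), mul_one]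

lemma prod_delta_of_mem : ∀ (l : List W) (t : W), l.Nodup → t ∈ l →
    (l.map delta).prod t = -1
  | [], t, _, hm => by simp at hm
  | u :: l, t, hn, hm => by
    obtain ⟨hu, hn'⟩ := List.nodup_cons.mp hn
    simp only [map_cons, prod_cons, Pi.mul_apply]
    rcases List.mem_cons.mp hm with rfl | hm
    · rw [delta_self, prod_delta_of_not_mem l t hu, mul_one]
    · rw [delta_of_ne (fun he => hu (by rw [← he]; exact hm)), prod_delta_of_mem l t hn' hm, one_mul]

local prefix:100 "s" => cs.simple
local prefix:100 "π" => cs.wordProd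
local prefix:100 "ℓ" => cs.length

lemma semidirect_pow (n : W → ℤˣ) (w : W) (c : ℕ) :
    (⟨n, w⟩ : (W → ℤˣ) ⋊[nuHom] W) ^ c
      = ⟨((List.range c).map (fun k => nuHom (w ^ k) n)).prod, w ^ c⟩ := by
  induction c with
  | zero => ext <;> simp
  | succ c ih =>
    rw [pow_succ, ih, SemidirectProduct.mul_def]
    congr 1
    · simp [List.range_succ]
    · rw [pow_succ]

lemma simple_conj_pow_simple (i j : B) (k : ℕ) :
    (s i * s j) ^ k * s i * ((s i * s j) ^ k)⁻¹ = (s i * s j) ^ (2 * k) * s i := by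
  have h1 : SemiconjBy (s i) ((s i * s j)⁻¹) (s i * s j) := by
    show s i * (s i * s j)⁻¹ = (s i * s j) * s i
    rw [mul_inv_rev, cs.inv_simple, cs.inv_simple]
    group
  have h2 : s i * ((s i * s j) ^ k)⁻¹ = (s i * s j) ^ k * s i := by
    have := (h1.pow_right k).eq
    rwa [inv_pow] at this
  rw [mul_assoc, h2, ← mul_assoc, ← pow_add, two_mul]

lemma pair_prod_delta (v : ℕ → W) (m : ℕ) :
    ((List.range m).map (fun k => delta (v (2 * k)) * delta (v (2 * k + 1)))).prod
      = ((List.range (2 * m)).map (fun c => delta (v c))).prod := by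
  induction m with
  | zero => simp
  | succ m ih =>
    rw [List.range_succ, show 2 * (m + 1) = (2 * m + 1) + 1 by ring, List.range_succ,
      List.range_succ]
    simp only [map_append, prod_append, map_cons, map_nil, prod_cons, prod_nil, ih]
    simp [mul_assoc]

lemma key_liftable (i j : B) :
    ((⟨delta (s i), s i⟩ : (W → ℤˣ) ⋊[nuHom] W) * ⟨delta (s j), s j⟩) ^ M i j = 1 := by
  have hum : (s i * s j) ^ M i j = 1 := cs.simple_mul_simple_pow i j
  have hmul : (⟨delta (s i), s i⟩ : (W → ℤˣ) ⋊[nuHom] W) * ⟨delta (s j), s j⟩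
      = ⟨delta (s i) * delta (s i * s j * s i), s i * s j⟩ := by
    rw [SemidirectProduct.mul_def]
    congr 1
    show delta (s i) * nuAut (s i) (delta (s j)) = _
    rw [nuAut_delta, cs.inv_simple]
  rw [hmul, semidirect_pow]
  have hterm : ∀ k : ℕ, nuHom ((s i * s j) ^ k) (delta (s i) * delta (s i * s j * s i))
      = delta ((s i * s j) ^ (2 * k) * s i) * delta ((s i * s j) ^ (2 * k + 1) * s i) := by
    intro k
    rw [map_mul]
    show nuAut ((s i * s j) ^ k) (delta (s i))
        * nuAut ((s i * s j) ^ k) (delta (s i * s j * s i)) = _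
    rw [nuAut_delta, nuAut_delta]
    congr 1
    · exact congrArg delta (simple_conj_pow_simple cs i j k)
    · apply congrArg delta
      have h3 : ∀ (u x : W) (k : ℕ), u ^ k * (u * x) * (u ^ k)⁻¹
          = u * (u ^ k * x * (u ^ k)⁻¹) := by
        intro u x k
        simp only [← mul_assoc, ← pow_succ, ← pow_succ']
      rw [h3 (s i * s j) (s i) k, simple_conj_pow_simple cs i j k, ← mul_assoc, ← pow_succ']
  have hQ : ((List.range (M i j)).map (fun k => nuHom ((s i * s j) ^ k)
        (delta (s i) * delta (s i * s j * s i)))).prod = 1 := by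
    rw [List.map_congr_left (fun k _ => hterm k),
      pair_prod_delta (fun c => (s i * s j) ^ c * s i) (M i j),
      two_mul, List.range_add, List.map_append, List.prod_append, List.map_map]
    have : ((List.range (M i j)).map
          ((fun c => delta ((s i * s j) ^ c * s i)) ∘ (fun x => M i j + x))).prod
        = ((List.range (M i j)).map (fun c => delta ((s i * s j) ^ c * s i))).prod := by
      congr 1
      apply List.map_congr_left
      intro c _
      show delta ((s i * s j) ^ (M i j + c) * s i) = _
      rw [pow_add, hum, one_mul]
    rw [this, sq_eq_one]
  rw [hQ, hum]
  rfl

/-- The Bourbaki cocycle homomorphism. -/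
def rho : W →* (W → ℤˣ) ⋊[nuHom] W :=
  cs.lift ⟨fun k => ⟨delta (s k), s k⟩, fun i j => key_liftable cs i j⟩

lemma rho_simple (k : B) : rho cs (s k) = ⟨delta (s k), s k⟩ := by
  exact cs.lift_apply_simple (fun i j => key_liftable cs i j) k

lemma rho_right (w : W) : (rho cs w).right = w := by
  have : (SemidirectProduct.rightHom.comp (rho cs)) = MonoidHom.id W := by
    apply cs.ext_simple
    intro k
    simp [rho_simple cs]
  exact DFunLike.congr_fun this w

/-- `eta cs w t = -1` iff `t` is a left inversion of `w`. -/
def eta (w : W) : W → ℤˣ := (rho cs w).left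

lemma eta_simple (k : B) : eta cs (s k) = delta (s k) := by
  rw [eta, rho_simple cs]

lemma eta_mul (w w' : W) : eta cs (w * w') = eta cs w * nuAut w (eta cs w') := by
  show (rho cs (w * w')).left = _
  rw [map_mul, SemidirectProduct.mul_left, rho_right cs]
  rfl

lemma leftInvSeq_cons (k : B) (ω : List B) :
    cs.leftInvSeq (k :: ω) = s k :: (cs.leftInvSeq ω).map (MulAut.conj (s k)) := rfl

lemma eta_wordProd (ω : List B) : eta cs (π ω) = ((cs.leftInvSeq ω).map delta).prod := by
  induction ω with
  | nil =>
    rw [cs.wordProd_nil]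
    show (rho cs 1).left = _
    rw [map_one]
    rfl
  | cons k ω ih =>
    rw [cs.wordProd_cons, eta_mul cs, eta_simple cs, ih, leftInvSeq_cons cs]
    simp only [map_cons, prod_cons]
    congr 1
    rw [← MulEquiv.coe_toMonoidHom, map_list_prod, List.map_map, List.map_map]
    congr 1
    apply List.map_congr_left
    intro t _
    show nuAut (s k) (delta t) = delta (MulAut.conj (s k) t)
    rw [nuAut_delta, MulAut.conj_apply]

lemma mem_leftInvSeq_of_eta {ω : List B} {t : W} (h : eta cs (π ω) t = -1) :
    t ∈ cs.leftInvSeq ω := by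
  by_contra hm
  rw [eta_wordProd cs, prod_delta_of_not_mem _ _ hm] at h
  exact neg_one_ne_one h.symm

lemma eta_of_mem_leftInvSeq {ω : List B} (hω : cs.IsReduced ω) {t : W}
    (h : t ∈ cs.leftInvSeq ω) : eta cs (π ω) t = -1 := by
  rw [eta_wordProd cs]
  exact prod_delta_of_mem _ _ hω.nodup_leftInvSeq h

lemma mem_leftInvSeq_of_descent {ω : List B} (hω : cs.IsReduced ω) {c : B}
    (hd : ℓ (s c * π ω) < ℓ (π ω)) : s c ∈ cs.leftInvSeq ω := by
  have key : eta cs (s c * π ω) (s c) = - eta cs (π ω) (s c) := by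
    rw [eta_mul cs, Pi.mul_apply, eta_simple cs, delta_self, nuAut_apply, cs.inv_simple,
      cs.simple_mul_simple_self c, one_mul, neg_one_mul]
  rcases Int.units_eq_one_or (eta cs (π ω) (s c)) with h1 | h1
  · exfalso
    obtain ⟨ω', hred', heq'⟩ := cs.exists_reduced_word' (s c * π ω)
    have hmem : s c ∈ cs.leftInvSeq ω' := by
      apply mem_leftInvSeq_of_eta cs
      rw [← heq', key, h1]
    have hinv := (cs.isLeftInversion_of_mem_leftInvSeq hred' hmem).2
    rw [← heq', cs.simple_mul_simple_cancel_left] at hinv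
    omega
  · exact mem_leftInvSeq_of_eta cs h1

open Classical in
lemma classChar_liftable (i0 : B) :
    M.IsLiftable (fun p =>
      if Relation.ReflTransGen (fun p q => Odd (M p q)) i0 p then (-1 : ℤˣ) else 1) := by
  intro p q
  dsimp only
  by_cases hp : Relation.ReflTransGen (fun p q => Odd (M p q)) i0 p
    <;> by_cases hq : Relation.ReflTransGen (fun p q => Odd (M p q)) i0 q
  · rw [if_pos hp, if_pos hq]
    norm_num
  · have he : ¬ Odd (M p q) := fun ho => hq (hp.tail ho)
    have he2 : Even (M p q) := Nat.not_odd_iff_even.mp he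
    rw [if_pos hp, if_neg hq, mul_one]
    exact he2.neg_one_pow
  · have he : ¬ Odd (M q p) := fun ho => hp (hq.tail ho)
    have he2 : Even (M p q) := Nat.not_odd_iff_even.mp (by rw [M.symmetric p q]; exact he)
    rw [if_neg hp, if_pos hq, one_mul]
    exact he2.neg_one_pow
  · rw [if_neg hp, if_neg hq, one_mul, one_pow]

lemma conj_simple_eq {a : B → ℝ} (h : ∀ i j, Odd (M i j) → a i = a j) {u v : W} {i j : B}
    (huv : u * s i * u⁻¹ = v * s j * v⁻¹) : a i = a j := by
  have hreach : Relation.ReflTransGen (fun p q => Odd (M p q)) i j := by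
    let ε := cs.lift ⟨_, classChar_liftable (M := M) i⟩
    have h1 : ε (u * s i * u⁻¹) = ε (s i) := by
      rw [map_mul, map_mul, map_inv, mul_inv_cancel_comm]
    have h2 : ε (v * s j * v⁻¹) = ε (s j) := by
      rw [map_mul, map_mul, map_inv, mul_inv_cancel_comm]
    have h3 : ε (s i) = ε (s j) := by rw [← h1, ← h2, huv]
    rw [cs.lift_apply_simple, cs.lift_apply_simple] at h3
    rw [if_pos Relation.ReflTransGen.refl] at h3
    by_contra hreach
    rw [if_neg hreach] at h3
    exact neg_one_ne_one h3
  clear huv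
  induction hreach with
  | refl => rfl
  | tail _ hbc ih => exact ih.trans (h _ _ hbc)

open Classical in
/-- A label for each reflection: the common value of `a` on the simple reflections
it is conjugate to. -/
def refLabel (a : B → ℝ) : W → ℝ := fun t =>
  if ht : ∃ w k, t = w * cs.simple k * w⁻¹ then a ht.choose_spec.choose else 0

lemma refLabel_conj (a : B → ℝ) (h : ∀ i j, Odd (M i j) → a i = a j) (w : W) (i : B) :
    refLabel cs a (w * s i * w⁻¹) = a i := by
  have ht : ∃ u k, w * s i * w⁻¹ = u * cs.simple k * u⁻¹ := ⟨w, i, rfl⟩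
  rw [refLabel, dif_pos ht]
  exact conj_simple_eq cs h ht.choose_spec.choose_spec.symm

lemma map_refLabel_leftInvSeq (a : B → ℝ) (h : ∀ i j, Odd (M i j) → a i = a j) :
    ∀ ω : List B, (cs.leftInvSeq ω).map (refLabel cs a) = ω.map a := by
  intro ω
  induction ω with
  | nil => rfl
  | cons k ω ih =>
    rw [leftInvSeq_cons cs, map_cons, map_cons, List.map_map]
    congr 1
    · have h0 : s k = (1 : W) * s k * (1 : W)⁻¹ := by group
      rw [h0, refLabel_conj cs a h]
    · rw [← ih]
      apply List.map_congr_left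
      intro t htm
      obtain ⟨w0, i0, rfl⟩ := cs.isReflection_of_mem_leftInvSeq ω htm
      show refLabel cs a (MulAut.conj (s k) (w0 * s i0 * w0⁻¹)) = _
      rw [MulAut.conj_apply,
        show s k * (w0 * s i0 * w0⁻¹) * (s k)⁻¹ = (s k * w0) * s i0 * (s k * w0)⁻¹ from by
          group,
        refLabel_conj cs a h, refLabel_conj cs a h]

lemma sum_eq_of_reduced (a : B → ℝ) (h : ∀ i j, Odd (M i j) → a i = a j)
    {ω ω' : List B} (hω : cs.IsReduced ω) (hω' : cs.IsReduced ω') (hp : π ω = π ω') :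
    (ω.map a).sum = (ω'.map a).sum := by
  rw [← map_refLabel_leftInvSeq cs a h, ← map_refLabel_leftInvSeq cs a h]
  apply List.Perm.sum_eq
  apply List.Perm.map
  rw [List.perm_ext_iff_of_nodup hω.nodup_leftInvSeq hω'.nodup_leftInvSeq]
  intro t
  constructor
  · intro hm
    exact mem_leftInvSeq_of_eta cs (by rw [← hp]; exact eta_of_mem_leftInvSeq cs hω hm)
  · intro hm
    exact mem_leftInvSeq_of_eta cs (by rw [hp]; exact eta_of_mem_leftInvSeq cs hω' hm)

lemma simple_semiconj (i j : B) (e : ℕ) : s i * (s j * s i) ^ e = (s i * s j) ^ e * s i :=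
  (SemiconjBy.pow_right (show SemiconjBy (s i) (s j * s i) (s i * s j) from
    (mul_assoc _ _ _).symm) e).eq

lemma simple_pow_inv (i j : B) (e : ℕ) : ((s i * s j) ^ e)⁻¹ = (s j * s i) ^ e := by
  rw [← inv_pow, mul_inv_rev, cs.inv_simple, cs.inv_simple]

lemma pal_even (i j : B) (e : ℕ) :
    π (CoxeterSystem.alternatingWord j i (e + e)) * s j
      * (π (CoxeterSystem.alternatingWord j i (e + e)))⁻¹
      = π (CoxeterSystem.alternatingWord i j (2 * (e + e) + 1)) := by
  rw [cs.prod_alternatingWord_eq_mul_pow, cs.prod_alternatingWord_eq_mul_pow]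
  rw [if_pos ⟨e, rfl⟩, if_neg (by simp [Nat.even_add_one, parity_simps]), one_mul]
  have h2 : (e + e) / 2 = e := by omega
  have h3 : (2 * (e + e) + 1) / 2 = e + e := by omega
  rw [h2, h3, simple_pow_inv cs j i e, pow_add, ← mul_assoc, simple_semiconj cs j i e]

lemma pal_odd (i j : B) (e : ℕ) :
    π (CoxeterSystem.alternatingWord j i (2 * e + 1)) * s j
      * (π (CoxeterSystem.alternatingWord j i (2 * e + 1)))⁻¹
      = π (CoxeterSystem.alternatingWord j i (2 * (2 * e + 1) + 1)) := by
  rw [cs.prod_alternatingWord_eq_mul_pow, cs.prod_alternatingWord_eq_mul_pow]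
  rw [if_neg (by simp [parity_simps]), if_neg (by simp [parity_simps])]
  have h2 : (2 * e + 1) / 2 = e := by omega
  have h3 : (2 * (2 * e + 1) + 1) / 2 = 2 * e + 1 := by omega
  rw [h2, h3]
  have h5 : (s i * (s j * s i) ^ e)⁻¹ = (s i * s j) ^ e * s i := by
    rw [mul_inv_rev, simple_pow_inv cs j i e, cs.inv_simple]
  rw [h5, show 2 * e + 1 = e + e + 1 by ring, pow_succ, pow_add]
  simp only [mul_assoc]
  rw [← mul_assoc (s j), simple_semiconj cs j i e, mul_assoc ((s j * s i) ^ e) (s j)]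

lemma lis_alternatingWord (m : ℕ) (i j : B) :
    cs.leftInvSeq (CoxeterSystem.alternatingWord i j m)
      = (List.range m).map (fun q => π (CoxeterSystem.alternatingWord
          (if Even m then j else i) (if Even m then i else j) (2 * q + 1))) := by
  induction m generalizing i j with
  | zero => simp [CoxeterSystem.alternatingWord]
  | succ m ih =>
    rw [CoxeterSystem.alternatingWord_succ, cs.leftInvSeq_concat, ih j i,
      List.range_succ, List.map_append, List.concat_eq_append]
    by_cases hm : Even m
    · have hm1 : ¬ Even (m + 1) := by simp [Nat.even_add_one, hm]
      rw [if_pos hm, if_pos hm, if_neg hm1, if_neg hm1]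
      congr 1
      obtain ⟨e, rfl⟩ := hm
      simp only [List.map_cons, List.map_nil]
      rw [pal_even cs i j e]
    · have hm1 : Even (m + 1) := by simp [Nat.even_add_one, hm]
      rw [if_neg hm, if_neg hm, if_pos hm1, if_pos hm1]
      congr 1
      obtain ⟨e, he⟩ := Nat.not_even_iff_odd.mp hm
      subst he
      simp only [List.map_cons, List.map_nil]
      rw [pal_odd cs i j e]

lemma isReduced_alternatingWord_of_le_orderOf (i j : B) :
    ∀ r, r ≤ orderOf (s i * s j) → cs.IsReduced (CoxeterSystem.alternatingWord i j r) := by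
  intro r
  induction r with
  | zero =>
    intro _
    show ℓ (π (CoxeterSystem.alternatingWord i j 0)) = _
    simp [CoxeterSystem.alternatingWord]
  | succ r ih =>
    intro hr
    have hred : cs.IsReduced (CoxeterSystem.alternatingWord i j r) :=
      ih (le_trans (Nat.le_succ r) hr)
    have hredlen : ℓ (π (CoxeterSystem.alternatingWord i j r)) = r := by
      have h0 : ℓ (π (CoxeterSystem.alternatingWord i j r))
          = (CoxeterSystem.alternatingWord i j r).length := hred
      rwa [CoxeterSystem.length_alternatingWord] at h0
    show ℓ (π (CoxeterSystem.alternatingWord i j (r + 1))) = _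
    rw [CoxeterSystem.alternatingWord_succ', cs.wordProd_cons, List.length_cons,
      CoxeterSystem.length_alternatingWord]
    rcases cs.length_simple_mul (π (CoxeterSystem.alternatingWord i j r))
      (if Even r then j else i) with hup | hdown
    · rw [hup, hredlen]
    · exfalso
      have hlt : ℓ ((s (if Even r then j else i)) * π (CoxeterSystem.alternatingWord i j r))
          < ℓ (π (CoxeterSystem.alternatingWord i j r)) := by omega
      have hmem := mem_leftInvSeq_of_descent cs hred hlt
      rw [lis_alternatingWord cs r i j] at hmem
      rw [List.mem_map] at hmem
      obtain ⟨q, hq, heq⟩ := hmem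
      rw [List.mem_range] at hq
      rw [cs.prod_alternatingWord_eq_mul_pow, if_neg (by simp [parity_simps]),
        (by omega : (2 * q + 1) / 2 = q)] at heq
      -- heq : s Y * (s c * s Y) ^ q = s c  where c = if Even r then j else i
      have hpow : ((s (if Even r then j else i)) * (s (if Even r then i else j))) ^ (q + 1)
          = 1 := by
        rw [pow_succ', mul_assoc, heq, cs.simple_mul_simple_self]
      have hord : orderOf ((s (if Even r then j else i)) * (s (if Even r then i else j)))
          = orderOf (s i * s j) := by
        by_cases hrp : Even r
        · rw [if_pos hrp, if_pos hrp,
            show s j * s i = (s i * s j)⁻¹ by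
              rw [mul_inv_rev, cs.inv_simple, cs.inv_simple],
            orderOf_inv]
        · rw [if_neg hrp, if_neg hrp]
      have hdvd := orderOf_dvd_of_pow_eq_one hpow
      rw [hord] at hdvd
      have := Nat.le_of_dvd (Nat.succ_pos q) hdvd
      omega

lemma braid_orderOf (i j : B) {e : ℕ} (he : orderOf (s i * s j) = 2 * e + 1) :
    π (CoxeterSystem.alternatingWord i j (orderOf (s i * s j)))
      = π (CoxeterSystem.alternatingWord j i (orderOf (s i * s j))) := by
  rw [cs.prod_alternatingWord_eq_mul_pow, cs.prod_alternatingWord_eq_mul_pow, he]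
  rw [if_neg (by simp [parity_simps]), if_neg (by simp [parity_simps]),
    (by omega : (2 * e + 1) / 2 = e)]
  have hrel : (s i * s j) ^ (2 * e + 1) = 1 := by
    rw [← he]
    exact pow_orderOf_eq_one _
  have h6 : (s i * s j) ^ (e + 1) = (s j * s i) ^ e := by
    have h61 : (s i * s j) ^ (e + 1) * (s i * s j) ^ e = 1 := by
      rw [← pow_add, show e + 1 + e = 2 * e + 1 by ring]
      exact hrel
    rw [eq_inv_of_mul_eq_one_left h61]
    exact simple_pow_inv cs i j e
  calc s j * (s i * s j) ^ e
      = (s j * s i) ^ e * s j := simple_semiconj cs j i e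
    _ = (s i * s j) ^ (e + 1) * s j := by rw [h6]
    _ = (s i * s j) ^ e * (s i * (s j * s j)) := by rw [pow_succ]; simp only [mul_assoc]
    _ = (s i * s j) ^ e * s i := by rw [cs.simple_mul_simple_self, mul_one]
    _ = s i * (s j * s i) ^ e := (simple_semiconj cs i j e).symm

lemma sum_map_alternatingWord (a : B → ℝ) (i j : B) (k : ℕ) :
    ((CoxeterSystem.alternatingWord i j (2 * k + 1)).map a).sum = k * (a i + a j) + a j := by
  induction k with
  | zero =>
    have h1 : CoxeterSystem.alternatingWord i j (2 * 0 + 1) = [j] := rfl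
    rw [h1]
    simp
  | succ k ih =>
    rw [show 2 * (k + 1) + 1 = (2 * k + 1) + 1 + 1 by ring,
      CoxeterSystem.alternatingWord_succ, CoxeterSystem.alternatingWord_succ]
    simp only [List.concat_eq_append, List.map_append, List.sum_append, List.map_cons,
      List.map_nil, List.sum_cons, List.sum_nil]
    rw [ih]
    push_cast
    ring

lemma phi_reduced (a : B → ℝ) (φ : W → ℝ)
    (hadd : ∀ x y : W, ℓ (x * y) = ℓ x + ℓ y → φ (x * y) = φ x + φ y)
    (hs : ∀ k : B, φ (s k) = a k) :
    ∀ ω : List B, cs.IsReduced ω → φ (π ω) = (ω.map a).sum := by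
  intro ω
  induction ω with
  | nil =>
    intro _
    have h1 := hadd 1 1 (by simp)
    rw [mul_one] at h1
    rw [cs.wordProd_nil]
    simp only [List.map_nil, List.sum_nil]
    linarith
  | cons k ω ih =>
    intro hred
    have hred' : cs.IsReduced ω := by
      have h2 := hred.drop 1
      simpa using h2
    have hlen2 : ℓ (π ω) = ω.length := hred'
    have hlen : ℓ (s k * π ω) = ℓ (s k) + ℓ (π ω) := by
      have h2 : ℓ (π (k :: ω)) = (k :: ω).length := hred
      rw [cs.wordProd_cons, List.length_cons] at h2
      rw [h2, cs.length_simple, hlen2]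
      omega
    rw [cs.wordProd_cons, hadd _ _ hlen, hs k, ih hred', List.map_cons, List.sum_cons]

lemma forward (a : B → ℝ) (φ : W → ℝ)
    (hadd : ∀ x y : W, ℓ (x * y) = ℓ x + ℓ y → φ (x * y) = φ x + φ y)
    (hs : ∀ k : B, φ (s k) = a k) (i j : B) (hodd : Odd (M i j)) : a i = a j := by
  have hM0 : M i j ≠ 0 := by
    intro h0
    rw [h0, Nat.odd_iff] at hodd
    omega
  have hu : (s i * s j) ^ M i j = 1 := cs.simple_mul_simple_pow i j
  have hdvd : orderOf (s i * s j) ∣ M i j := orderOf_dvd_of_pow_eq_one hu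
  have hodd' : Odd (orderOf (s i * s j)) := by
    rcases Nat.even_or_odd (orderOf (s i * s j)) with hev | ho
    · exfalso
      have h2 : (2 : ℕ) ∣ M i j := dvd_trans hev.two_dvd hdvd
      rw [Nat.odd_iff] at hodd
      omega
    · exact ho
  have hji : s j * s i = (s i * s j)⁻¹ := by
    rw [mul_inv_rev, cs.inv_simple, cs.inv_simple]
  have hred1 : cs.IsReduced (CoxeterSystem.alternatingWord i j (orderOf (s i * s j))) :=
    isReduced_alternatingWord_of_le_orderOf cs i j _ le_rfl
  have hred2 : cs.IsReduced (CoxeterSystem.alternatingWord j i (orderOf (s i * s j))) := by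
    have h3 : orderOf (s i * s j) = orderOf (s j * s i) := by rw [hji, orderOf_inv]
    exact isReduced_alternatingWord_of_le_orderOf cs j i _ (le_of_eq h3)
  obtain ⟨e, he⟩ := hodd'
  have hbraid := braid_orderOf cs i j he
  have h1 := phi_reduced cs a φ hadd hs _ hred1
  have h2 := phi_reduced cs a φ hadd hs _ hred2
  rw [hbraid, h2] at h1
  rw [show orderOf (s i * s j) = 2 * e + 1 by omega] at h1
  rw [sum_map_alternatingWord, sum_map_alternatingWord] at h1
  linarith

end

end CoxWeight

/-- Let `(W, S)` be a Coxeter system with Coxeter matrix `(m_{s,t})` and let `(a_s)_{s ∈ S}`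
be real numbers. There exists a weight function `φ : W → ℝ` (that is, `φ (x y) = φ x + φ y`
whenever `ℓ (x y) = ℓ x + ℓ y`) with `φ s = a_s` for all simple reflections `s`, if and only
if `a_s = a_t` whenever `m_{s,t}` is odd. -/
theorem coxeter_weightFunction_exists_iff {B W : Type*} [Group W] {M : CoxeterMatrix B}
    (cs : CoxeterSystem M W) (a : B → ℝ) :
    (∃ φ : W → ℝ,
        (∀ x y : W, cs.length (x * y) = cs.length x + cs.length y →
          φ (x * y) = φ x + φ y) ∧
        ∀ i : B, φ (cs.simple i) = a i) ↔
      ∀ i j : B, Odd (M i j) → a i = a j := by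
  constructor
  · rintro ⟨φ, hadd, hs⟩ i j hodd
    exact CoxWeight.forward cs a φ hadd hs i j hodd
  · intro h
    refine ⟨fun w => (((cs.exists_reduced_word' w).choose).map a).sum, ?_, ?_⟩
    · intro x y hxy
      obtain ⟨hxr, hxe⟩ := (cs.exists_reduced_word' x).choose_spec
      obtain ⟨hyr, hye⟩ := (cs.exists_reduced_word' y).choose_spec
      obtain ⟨hzr, hze⟩ := (cs.exists_reduced_word' (x * y)).choose_spec
      set ωx := (cs.exists_reduced_word' x).choose
      set ωy := (cs.exists_reduced_word' y).choose
      have hprod : cs.wordProd (ωx ++ ωy) = x * y := by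
        rw [cs.wordProd_append, ← hxe, ← hye]
      have hcat : cs.IsReduced (ωx ++ ωy) := by
        show cs.length (cs.wordProd (ωx ++ ωy)) = (ωx ++ ωy).length
        have hx1 : cs.length x = ωx.length := by rw [hxe]; exact hxr
        have hy1 : cs.length y = ωy.length := by rw [hye]; exact hyr
        rw [hprod, hxy, List.length_append, hx1, hy1]
      have hsum := CoxWeight.sum_eq_of_reduced cs a h hzr hcat (by rw [hprod]; exact hze.symm)
      rw [List.map_append, List.sum_append] at hsum
      exact hsum
    · intro k
      obtain ⟨hkr, hke⟩ := (cs.exists_reduced_word' (cs.simple k)).choose_spec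
      have hsingle : cs.IsReduced [k] := by
        show cs.length (cs.wordProd [k]) = _
        rw [cs.wordProd_singleton, cs.length_simple]
        rfl
      have hsum := CoxWeight.sum_eq_of_reduced cs a h hkr hsingle
        (by rw [← hke, cs.wordProd_singleton])
      exact hsum.trans (by simp)
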